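/- arXiv:2202.13216 — 3 statements merged into one kernel-verified Lean document; each statement's English description precedes it below -/
import Mathlib

section
/- Suppose Φ : ℝ^d → ℝ^p is such that for all δ with ‖δ‖₂ ≤ r one has ‖Φ(x+δ) - Φ(x)‖₂ ≤ l‖δ‖₂, and let h(x) = A Φ(x) for a matrix A ∈ ℝ^{C×p}. If the predicted label ŷ(x) = argmax_j h(x)_j has positive margin M(h(x), ŷ(x)) > 0, then for any perturbation δ with ‖δ‖₂ ≤ min{r, M(h(x), ŷ(x)) / (2‖A‖₂ l)}, the predicted label is unchanged: argmax_j h(x+δ)_j = ŷ(x). -/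
open Finset

/-- The margin operator `M(v, y) = v_y - max_{j ≠ y} v_j`. -/
noncomputable def margin {C : ℕ} (hne : ∀ y : Fin C, (Finset.univ.erase y).Nonempty)
    (v : EuclideanSpace ℝ (Fin C)) (y : Fin C) : ℝ :=
  v y - (Finset.univ.erase y).sup' (hne y) (fun j => v j)

lemma coord_le_norm {C : ℕ} (v : EuclideanSpace ℝ (Fin C)) (i : Fin C) :
    |v i| ≤ ‖v‖ := by
  rw [EuclideanSpace.norm_eq]
  have : |v i| = Real.sqrt (‖v i‖ ^ 2) := by
    rw [Real.sqrt_sq_eq_abs]; simp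
  rw [this]
  apply Real.sqrt_le_sqrt
  exact Finset.single_le_sum (f := fun j => ‖v j‖ ^ 2)
    (fun j _ => by positivity) (Finset.mem_univ i)

lemma margin_lb {C : ℕ} (hne : ∀ y : Fin C, (Finset.univ.erase y).Nonempty)
    (v w : EuclideanSpace ℝ (Fin C)) (y : Fin C) (ε : ℝ)
    (hε : ∀ i, |w i - v i| ≤ ε) :
    margin hne v y - 2 * ε ≤ margin hne w y := by
  have h1 : v y - ε ≤ w y := by
    have := hε y; rw [abs_le] at this; linarith [this.1]
  have h2 : (Finset.univ.erase y).sup' (hne y) (fun j => w j)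
      ≤ (Finset.univ.erase y).sup' (hne y) (fun j => v j) + ε := by
    apply Finset.sup'_le
    intro j hj
    have := hε j; rw [abs_le] at this
    have : w j ≤ v j + ε := by linarith [this.2]
    exact this.trans (by linarith [Finset.le_sup' (fun j => v j) hj])
  unfold margin
  linarith

/-- Certified robustness for a representation-linear predictor `h = A ∘ Φ` where `Φ`
is locally Lipschitz at `x` with radius `r` and scale `l`:  any perturbation with energy
below `min {r, M(h(x), ŷ(x)) / (2‖A‖ l)}` does not change the predicted label. -/
theorem certified_radius {C d p : ℕ} (hC : 2 ≤ C)
    (hne : ∀ y : Fin C, (Finset.univ.erase y).Nonempty)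
    (Φ : EuclideanSpace ℝ (Fin d) → EuclideanSpace ℝ (Fin p))
    (A : EuclideanSpace ℝ (Fin p) →L[ℝ] EuclideanSpace ℝ (Fin C))
    (x : EuclideanSpace ℝ (Fin d)) (r l : ℝ) (hr : 0 ≤ r) (hl : 0 < l)
    (hΦ : ∀ δ : EuclideanSpace ℝ (Fin d), ‖δ‖ ≤ r → ‖Φ (x + δ) - Φ x‖ ≤ l * ‖δ‖)
    -- `pred` is the predicted label (argmax with deterministic tie-breaking):
    (pred : EuclideanSpace ℝ (Fin C) → Fin C)
    -- tie-breaking assumption: nonnegative margin w.r.t. `ŷ(x)` implies the label is `ŷ(x)`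
    (hpred : ∀ v : EuclideanSpace ℝ (Fin C), 0 ≤ margin hne v (pred (A (Φ x))) →
      pred v = pred (A (Φ x)))
    -- positive classification margin at `x`
    (hmargin : 0 < margin hne (A (Φ x)) (pred (A (Φ x))))
    (δ : EuclideanSpace ℝ (Fin d))
    (hδ : ‖δ‖ ≤ min r (margin hne (A (Φ x)) (pred (A (Φ x))) / (2 * ‖A‖ * l))) :
    pred (A (Φ (x + δ))) = pred (A (Φ x)) := by
  set M := margin hne (A (Φ x)) (pred (A (Φ x))) with hM
  have hδr : ‖δ‖ ≤ r := hδ.trans (min_le_left _ _)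
  have hΦb : ‖Φ (x + δ) - Φ x‖ ≤ l * ‖δ‖ := hΦ δ hδr
  have hAb : ‖A (Φ (x + δ)) - A (Φ x)‖ ≤ ‖A‖ * (l * ‖δ‖) := by
    calc ‖A (Φ (x + δ)) - A (Φ x)‖ = ‖A (Φ (x + δ) - Φ x)‖ := by rw [map_sub]
    _ ≤ ‖A‖ * ‖Φ (x + δ) - Φ x‖ := A.le_opNorm _
    _ ≤ ‖A‖ * (l * ‖δ‖) := by
        exact mul_le_mul_of_nonneg_left hΦb (norm_nonneg _)
  have hhalf : ‖A‖ * (l * ‖δ‖) ≤ M / 2 := by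
    rcases eq_or_lt_of_le (norm_nonneg A) with hA | hA
    · rw [← hA]; linarith
    · have hδ2 : ‖δ‖ ≤ M / (2 * ‖A‖ * l) := hδ.trans (min_le_right _ _)
      have h2 : 0 < 2 * ‖A‖ * l := by positivity
      rw [le_div_iff₀ h2] at hδ2
      nlinarith [norm_nonneg δ]
  apply hpred
  have := margin_lb hne (A (Φ x)) (A (Φ (x + δ))) (pred (A (Φ x))) (M / 2)
    (fun i => by
      calc |(A (Φ (x + δ))) i - (A (Φ x)) i| = |(A (Φ (x + δ)) - A (Φ x)) i| := by
            simp [PiLp.sub_apply]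
      _ ≤ ‖A (Φ (x + δ)) - A (Φ x)‖ := coord_le_norm _ _
      _ ≤ M / 2 := hAb.trans hhalf)
  linarith
end

section
/- Let Φ(t) = ReLU(W t + b) with W ∈ ℝ^{p×d}, and suppose t, t' ∈ ℝ^d and there are index sets I_out ⊆ {1,...,p} and I_in ⊆ {1,...,d} such that (a) for all i ∈ I_out, both w_i·t + b_i ≤ 0 and w_i·t' + b_i ≤ 0, and (b) t and t' both vanish on I_in. Then ‖Φ(t') - Φ(t)‖₂ ≤ ‖P_{J_out, J_in}(W)‖₂ · ‖t' - t‖₂, where J_out = I_out^c, J_in = I_in^c, and P_{J_out, J_in}(W) is the submatrix of W with rows in J_out and columns in J_in. -/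
open Finset

/-- Operator norm (w.r.t. Euclidean vector norms) of a real matrix. -/
noncomputable def opNorm {α β : Type*} [Fintype α] [Fintype β] [DecidableEq β]
    (M : Matrix α β ℝ) : ℝ :=
  ‖LinearMap.toContinuousLinearMap (Matrix.toEuclideanLin M)‖

/-- ReLU layer Lipschitz bound via the reduced submatrix: if `t, t'` share the inactive
output index set `I_out` and both vanish on `I_in`, then
`‖Φ(t') - Φ(t)‖₂ ≤ ‖P_{J_out, J_in}(W)‖₂ · ‖t' - t‖₂`. -/
theorem relu_layer_reduced_lipschitz {p d : ℕ}
    (W : Matrix (Fin p) (Fin d) ℝ) (b : Fin p → ℝ)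
    (t t' : EuclideanSpace ℝ (Fin d))
    (Iout : Finset (Fin p)) (Iin : Finset (Fin d))
    (hout : ∀ i ∈ Iout, (∑ j, W i j * t j) + b i ≤ 0 ∧ (∑ j, W i j * t' j) + b i ≤ 0)
    (hin : ∀ j ∈ Iin, t j = 0 ∧ t' j = 0)
    (Φ : EuclideanSpace ℝ (Fin d) → EuclideanSpace ℝ (Fin p))
    (hΦ : Φ = fun u => WithLp.toLp 2 (fun i => max ((∑ j, W i j * u j) + b i) 0 : Fin p → ℝ)) :
    ‖Φ t' - Φ t‖ ≤
      opNorm (Matrix.submatrix W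
          (fun i : {i : Fin p // i ∈ Ioutᶜ} => (i : Fin p))
          (fun j : {j : Fin d // j ∈ Iinᶜ} => (j : Fin d))) * ‖t' - t‖ := by
  set M := Matrix.submatrix W
      (fun i : {i : Fin p // i ∈ Ioutᶜ} => (i : Fin p))
      (fun j : {j : Fin d // j ∈ Iinᶜ} => (j : Fin d)) with hM
  set u : EuclideanSpace ℝ {j : Fin d // j ∈ Iinᶜ} :=
      WithLp.toLp 2 (fun j => t' (j : Fin d) - t (j : Fin d)) with hu
  have happ : ∀ i, (Matrix.toEuclideanLin M) u i = ∑ j, M i j * u j := by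
    intro i
    simp [Matrix.toEuclideanLin, Matrix.mulVec, dotProduct, hu]
  -- Step A
  have hA : ‖Φ t' - Φ t‖ ≤ ‖(Matrix.toEuclideanLin M) u‖ := by
    rw [EuclideanSpace.norm_eq, EuclideanSpace.norm_eq]
    apply Real.sqrt_le_sqrt
    have hsplit : ∑ i : Fin p, ‖(Φ t' - Φ t) i‖ ^ 2
        = ∑ i ∈ Iout, ‖(Φ t' - Φ t) i‖ ^ 2 + ∑ i ∈ Ioutᶜ, ‖(Φ t' - Φ t) i‖ ^ 2 :=
      (Finset.sum_add_sum_compl Iout _).symm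
    rw [hsplit]
    have hzero : ∑ i ∈ Iout, ‖(Φ t' - Φ t) i‖ ^ 2 = 0 := by
      apply Finset.sum_eq_zero
      intro i hi
      obtain ⟨h1, h2⟩ := hout i hi
      have : (Φ t' - Φ t) i = Φ t' i - Φ t i := rfl
      rw [this, hΦ]
      simp [max_eq_right h1, max_eq_right h2]
    rw [hzero, zero_add]
    have hLHS : ∑ i ∈ Ioutᶜ, ‖(Φ t' - Φ t) i‖ ^ 2
        = ∑ i : {i : Fin p // i ∈ Ioutᶜ}, ‖(Φ t' - Φ t) (i : Fin p)‖ ^ 2 :=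
      (Finset.sum_coe_sort Ioutᶜ (fun i => ‖(Φ t' - Φ t) i‖ ^ 2)).symm
    rw [hLHS]
    apply Finset.sum_le_sum
    intro ⟨i, hi⟩ _
    have key : Φ t' i - Φ t i
        = max ((∑ j, W i j * t' j) + b i) 0 - max ((∑ j, W i j * t j) + b i) 0 := by
      rw [hΦ]
    have hdiff : (Matrix.toEuclideanLin M) u ⟨i, hi⟩
        = ((∑ j, W i j * t' j) + b i) - ((∑ j, W i j * t j) + b i) := by
      rw [happ]
      have : ∑ j : {j : Fin d // j ∈ Iinᶜ}, M ⟨i, hi⟩ j * u j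
          = ∑ j ∈ Iinᶜ, W i j * (t' j - t j) := by
        rw [← Finset.sum_coe_sort Iinᶜ (fun j => W i j * (t' j - t j))]
        rfl
      rw [this]
      have hfull : ∑ j ∈ Iinᶜ, W i j * (t' j - t j)
          = ∑ j, W i j * (t' j - t j) := by
        apply Finset.sum_subset (Finset.subset_univ _)
        intro j _ hj
        obtain ⟨h1, h2⟩ := hin j (by simpa using hj)
        simp [h1, h2]
      rw [hfull]
      simp only [mul_sub, Finset.sum_sub_distrib]
      ring
    have habs : |Φ t' i - Φ t i| ≤ |(Matrix.toEuclideanLin M) u ⟨i, hi⟩| := by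
      rw [key, hdiff]
      exact abs_max_sub_max_le_abs _ _ _
    have h1 : (Φ t' - Φ t) i = Φ t' i - Φ t i := rfl
    rw [h1, Real.norm_eq_abs, Real.norm_eq_abs]
    exact pow_le_pow_left₀ (abs_nonneg _) habs 2
  -- Step B
  have hB : ‖(Matrix.toEuclideanLin M) u‖ ≤ opNorm M * ‖u‖ := by
    have := (LinearMap.toContinuousLinearMap (Matrix.toEuclideanLin M)).le_opNorm u
    simpa [opNorm] using this
  -- Step C
  have hC : ‖u‖ ≤ ‖t' - t‖ := by
    rw [EuclideanSpace.norm_eq, EuclideanSpace.norm_eq]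
    apply Real.sqrt_le_sqrt
    have : ∑ j : {j : Fin d // j ∈ Iinᶜ}, ‖u j‖ ^ 2
        = ∑ j ∈ Iinᶜ, ‖t' j - t j‖ ^ 2 := by
      rw [← Finset.sum_coe_sort Iinᶜ (fun j => ‖t' j - t j‖ ^ 2)]
    rw [this]
    have h2 : ∀ j : Fin d, ‖(t' - t) j‖ ^ 2 = ‖t' j - t j‖ ^ 2 := fun j => rfl
    simp only [h2]
    apply Finset.sum_le_sum_of_subset_of_nonneg (Finset.subset_univ _)
    intro j _ _
    positivity
  calc ‖Φ t' - Φ t‖ ≤ ‖(Matrix.toEuclideanLin M) u‖ := hA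
    _ ≤ opNorm M * ‖u‖ := hB
    _ ≤ opNorm M * ‖t' - t‖ := by
        apply mul_le_mul_of_nonneg_left hC (norm_nonneg _)
end

section
/- For any matrix W ∈ ℝ^{d₁×d₂} with nonzero rows and any nonempty index sets J₁ ⊆ {1,...,d₁}, J₂ ⊆ {1,...,d₂} with |J₁| = d₁ - s₁ and |J₂| = d₂ - s₂, the operator norm of the submatrix P_{J₁,J₂}(W) satisfies ‖P_{J₁,J₂}(W)‖₂ ≤ √(1 + μ_{s₁,s₂}(W)) · ‖W‖_{2,∞}, where μ_{s₁,s₂}(W) is the reduced babel function defined below. -/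
open Finset

/-- Inner product of rows `i` and `j` of `W` restricted to the columns in `J₂`. -/
def pInner {d₁ d₂ : ℕ} (W : Matrix (Fin d₁) (Fin d₂) ℝ) (J₂ : Finset (Fin d₂))
    (i j : Fin d₁) : ℝ := ∑ k ∈ J₂, W i k * W j k

/-- Euclidean norm of row `i` of `W` restricted to the columns in `J₂`. -/
noncomputable def pNorm {d₁ d₂ : ℕ} (W : Matrix (Fin d₁) (Fin d₂) ℝ) (J₂ : Finset (Fin d₂))
    (i : Fin d₁) : ℝ := Real.sqrt (∑ k ∈ J₂, (W i k) ^ 2)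

/-- Normalized coherence between rows `i` and `j` restricted to columns `J₂`. -/
noncomputable def redCoh {d₁ d₂ : ℕ} (W : Matrix (Fin d₁) (Fin d₂) ℝ) (J₂ : Finset (Fin d₂))
    (i j : Fin d₁) : ℝ := |pInner W J₂ i j| / (pNorm W J₂ i * pNorm W J₂ j)

/-- The reduced babel function `μ_{s₁,s₂}(W)`. -/
noncomputable def redBabel {d₁ d₂ : ℕ} (W : Matrix (Fin d₁) (Fin d₂) ℝ) (s₁ s₂ : ℕ) : ℝ :=
  sSup {x : ℝ | ∃ J₁ : Finset (Fin d₁), J₁.card = d₁ - s₁ ∧ ∃ j ∈ J₁,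
    x = ∑ i ∈ J₁.erase j,
      sSup {y : ℝ | ∃ J₂ : Finset (Fin d₂), J₂.card = d₂ - s₂ ∧ y = redCoh W J₂ i j}}

/-- The `(2,∞)` group norm of `W` : the maximal Euclidean norm of a row. -/
noncomputable def norm2inf {d₁ d₂ : ℕ} [NeZero d₁] (W : Matrix (Fin d₁) (Fin d₂) ℝ) : ℝ :=
  Finset.univ.sup' Finset.univ_nonempty (fun i => pNorm W Finset.univ i)

/-- Bound on the operator norm of any submatrix via the reduced babel function:
`‖P_{J₁,J₂}(W)‖₂ ≤ √(1 + μ_{s₁,s₂}(W)) · ‖W‖_{2,∞}`. -/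
theorem submatrix_opNorm_le_babel {d₁ d₂ : ℕ} [NeZero d₁] [NeZero d₂]
    (W : Matrix (Fin d₁) (Fin d₂) ℝ)
    (hrows : ∀ i, pNorm W Finset.univ i ≠ 0)
    (s₁ s₂ : ℕ) (hs₁ : s₁ ≤ d₁ - 1) (hs₂ : s₂ ≤ d₂ - 1)
    (J₁ : Finset (Fin d₁)) (J₂ : Finset (Fin d₂))
    (hJ₁ : J₁.card = d₁ - s₁) (hJ₂ : J₂.card = d₂ - s₂)
    (hJ₁ne : J₁.Nonempty) (hJ₂ne : J₂.Nonempty) :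
    opNorm (Matrix.submatrix W
        (fun i : {i : Fin d₁ // i ∈ J₁} => (i : Fin d₁))
        (fun j : {j : Fin d₂ // j ∈ J₂} => (j : Fin d₂)))
      ≤ Real.sqrt (1 + redBabel W s₁ s₂) * norm2inf W := by
  classical
  set B := norm2inf W with hBdef
  set μ := redBabel W s₁ s₂ with hμdef
  have hpn0 : ∀ (J : Finset (Fin d₂)) i, 0 ≤ pNorm W J i := fun J i => Real.sqrt_nonneg _
  have hpn_le : ∀ (J : Finset (Fin d₂)) i, pNorm W J i ≤ B := by
    intro J i
    have h1 : pNorm W J i ≤ pNorm W Finset.univ i := by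
      apply Real.sqrt_le_sqrt
      exact Finset.sum_le_sum_of_subset_of_nonneg (Finset.subset_univ J)
        (fun k _ _ => sq_nonneg _)
    exact h1.trans (Finset.le_sup' _ (Finset.mem_univ i))
  obtain ⟨j₀, hj₀⟩ := hJ₁ne
  have hB0 : 0 ≤ B := (hpn0 Finset.univ j₀).trans (hpn_le Finset.univ j₀)
  have hcoh0 : ∀ (J : Finset (Fin d₂)) i j, 0 ≤ redCoh W J i j := fun J i j =>
    div_nonneg (abs_nonneg _) (mul_nonneg (hpn0 _ _) (hpn0 _ _))
  -- the inner sup dominates our particular J₂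
  have hY : ∀ i j : Fin d₁, redCoh W J₂ i j ≤
      sSup {y : ℝ | ∃ J₂' : Finset (Fin d₂), J₂'.card = d₂ - s₂ ∧ y = redCoh W J₂' i j} := by
    intro i j
    refine le_csSup ?_ ⟨J₂, hJ₂, rfl⟩
    apply BddAbove.mono ?_ (Set.finite_range
      (fun J' : Finset (Fin d₂) => redCoh W J' i j)).bddAbove
    rintro y ⟨J', _, rfl⟩
    exact ⟨J', rfl⟩
  -- the row sum of coherences is at most μ
  have hrowμ : ∀ j ∈ J₁, ∑ i ∈ J₁.erase j, redCoh W J₂ i j ≤ μ := by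
    intro j hj
    refine (Finset.sum_le_sum (fun i _ => hY i j)).trans ?_
    rw [hμdef, redBabel]
    refine le_csSup ?_ ⟨J₁, hJ₁, j, hj, rfl⟩
    apply BddAbove.mono ?_ (Set.finite_range
      (fun p : Finset (Fin d₁) × Fin d₁ => ∑ i ∈ p.1.erase p.2,
        sSup {y : ℝ | ∃ J₂' : Finset (Fin d₂), J₂'.card = d₂ - s₂ ∧ y = redCoh W J₂' i p.2})).bddAbove
    rintro y ⟨J', _, j', _, rfl⟩
    exact ⟨(J', j'), rfl⟩
  have hμ0 : 0 ≤ μ :=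
    (Finset.sum_nonneg (fun i _ => hcoh0 J₂ i j₀)).trans (hrowμ j₀ hj₀)
  -- Cauchy-Schwarz for pInner
  have hCSp : ∀ i j : Fin d₁, |pInner W J₂ i j| ≤ pNorm W J₂ i * pNorm W J₂ j := by
    intro i j
    have h := sum_mul_sq_le_sq_mul_sq J₂ (fun k => W i k) (fun k => W j k)
    calc |pInner W J₂ i j| = Real.sqrt ((pInner W J₂ i j) ^ 2) := (Real.sqrt_sq_eq_abs _).symm
      _ ≤ Real.sqrt ((∑ k ∈ J₂, (W i k) ^ 2) * (∑ k ∈ J₂, (W j k) ^ 2)) := by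
          apply Real.sqrt_le_sqrt; exact h
      _ = pNorm W J₂ i * pNorm W J₂ j := by
          rw [pNorm, pNorm, ← Real.sqrt_mul (Finset.sum_nonneg fun k _ => sq_nonneg _)]
  -- off-diagonal bound
  have hoff : ∀ i j : Fin d₁, |pInner W J₂ i j| ≤ redCoh W J₂ i j * B ^ 2 := by
    intro i j
    by_cases h : pNorm W J₂ i * pNorm W J₂ j = 0
    · calc |pInner W J₂ i j| ≤ 0 := by rw [← h]; exact hCSp i j
        _ ≤ redCoh W J₂ i j * B ^ 2 := mul_nonneg (hcoh0 _ _ _) (sq_nonneg _)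
    · calc |pInner W J₂ i j| = redCoh W J₂ i j * (pNorm W J₂ i * pNorm W J₂ j) := by
            rw [redCoh, div_mul_cancel₀ _ h]
        _ ≤ redCoh W J₂ i j * B ^ 2 := by
            apply mul_le_mul_of_nonneg_left ?_ (hcoh0 _ _ _)
            calc pNorm W J₂ i * pNorm W J₂ j ≤ B * B :=
                  mul_le_mul (hpn_le _ _) (hpn_le _ _) (hpn0 _ _) hB0
              _ = B ^ 2 := (sq B).symm
  -- diagonal bound
  have hdiag : ∀ j : Fin d₁, |pInner W J₂ j j| ≤ B ^ 2 := by
    intro j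
    have h1 : pInner W J₂ j j = (pNorm W J₂ j) ^ 2 := by
      rw [pNorm, Real.sq_sqrt (Finset.sum_nonneg fun k _ => sq_nonneg _), pInner]
      exact Finset.sum_congr rfl fun k _ => (sq (W j k)).symm
    rw [h1, abs_of_nonneg (sq_nonneg _)]
    exact pow_le_pow_left₀ (hpn0 _ _) (hpn_le _ _) 2
  -- Gerschgorin row bound
  have hG : ∀ j ∈ J₁, ∑ i ∈ J₁, |pInner W J₂ i j| ≤ (1 + μ) * B ^ 2 := by
    intro j hj
    rw [← Finset.add_sum_erase _ _ hj]
    have h2 : ∑ i ∈ J₁.erase j, |pInner W J₂ i j| ≤ μ * B ^ 2 := by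
      calc ∑ i ∈ J₁.erase j, |pInner W J₂ i j|
          ≤ ∑ i ∈ J₁.erase j, redCoh W J₂ i j * B ^ 2 :=
            Finset.sum_le_sum fun i _ => hoff i j
        _ = (∑ i ∈ J₁.erase j, redCoh W J₂ i j) * B ^ 2 := (Finset.sum_mul _ _ _).symm
        _ ≤ μ * B ^ 2 := mul_le_mul_of_nonneg_right (hrowμ j hj) (sq_nonneg _)
    have h3 := hdiag j
    nlinarith [sq_nonneg B]
  have hsymm : ∀ i j : Fin d₁, pInner W J₂ i j = pInner W J₂ j i := fun i j =>
    Finset.sum_congr rfl fun k _ => mul_comm _ _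
  -- main bound on the operator norm
  have hK0 : 0 ≤ Real.sqrt (1 + μ) * B := mul_nonneg (Real.sqrt_nonneg _) hB0
  rw [opNorm]
  apply ContinuousLinearMap.opNorm_le_bound _ hK0
  intro x
  simp only [LinearMap.coe_toContinuousLinearMap']
  set A := Matrix.submatrix W
      (fun i : {i : Fin d₁ // i ∈ J₁} => (i : Fin d₁))
      (fun j : {j : Fin d₂ // j ∈ J₂} => (j : Fin d₂)) with hA
  set c : {i : Fin d₁ // i ∈ J₁} → ℝ :=
    fun i => ∑ k : {j : Fin d₂ // j ∈ J₂}, W (i : Fin d₁) (k : Fin d₂) * x k with hc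
  have happly : ∀ i, (Matrix.toEuclideanLin A) x i = c i := by
    intro i
    simp [Matrix.toEuclideanLin_apply, Matrix.mulVec, dotProduct, hA, hc]
  set S := ∑ i : {i : Fin d₁ // i ∈ J₁}, (c i) ^ 2 with hS
  set T := ∑ k : {j : Fin d₂ // j ∈ J₂}, (x k) ^ 2 with hT
  set R := (1 + μ) * B ^ 2 with hR
  have hT0 : 0 ≤ T := Finset.sum_nonneg fun k _ => sq_nonneg _
  have hS0 : 0 ≤ S := Finset.sum_nonneg fun i _ => sq_nonneg _
  have hR0 : 0 ≤ R := mul_nonneg (by linarith) (sq_nonneg _)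
  -- row sums over the subtype
  have hrow1 : ∀ i : {i : Fin d₁ // i ∈ J₁},
      ∑ j : {i : Fin d₁ // i ∈ J₁}, |pInner W J₂ (i : Fin d₁) (j : Fin d₁)| ≤ R := by
    intro i
    calc ∑ j : {i : Fin d₁ // i ∈ J₁}, |pInner W J₂ (i : Fin d₁) (j : Fin d₁)|
        = ∑ j ∈ J₁, |pInner W J₂ (i : Fin d₁) j| :=
          Finset.sum_coe_sort J₁ (fun j => |pInner W J₂ (i : Fin d₁) j|)
      _ = ∑ j ∈ J₁, |pInner W J₂ j (i : Fin d₁)| :=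
          Finset.sum_congr rfl fun j _ => by rw [hsymm]
      _ ≤ R := hG (i : Fin d₁) i.2
  have hrow2 : ∀ j : {i : Fin d₁ // i ∈ J₁},
      ∑ i : {i : Fin d₁ // i ∈ J₁}, |pInner W J₂ (i : Fin d₁) (j : Fin d₁)| ≤ R := by
    intro j
    calc ∑ i : {i : Fin d₁ // i ∈ J₁}, |pInner W J₂ (i : Fin d₁) (j : Fin d₁)|
        = ∑ i ∈ J₁, |pInner W J₂ i (j : Fin d₁)| :=
          Finset.sum_coe_sort J₁ (fun i => |pInner W J₂ i (j : Fin d₁)|)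
      _ ≤ R := hG (j : Fin d₁) j.2
  -- quadratic form bound
  have half1 : ∑ i : {i : Fin d₁ // i ∈ J₁}, ∑ j : {i : Fin d₁ // i ∈ J₁},
      (c i) ^ 2 * |pInner W J₂ (i : Fin d₁) (j : Fin d₁)| ≤ S * R := by
    calc ∑ i : {i : Fin d₁ // i ∈ J₁}, ∑ j : {i : Fin d₁ // i ∈ J₁},
        (c i) ^ 2 * |pInner W J₂ (i : Fin d₁) (j : Fin d₁)|
        = ∑ i : {i : Fin d₁ // i ∈ J₁}, (c i) ^ 2 *
            ∑ j : {i : Fin d₁ // i ∈ J₁}, |pInner W J₂ (i : Fin d₁) (j : Fin d₁)| := by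
          exact Finset.sum_congr rfl fun i _ => (Finset.mul_sum _ _ _).symm
      _ ≤ ∑ i : {i : Fin d₁ // i ∈ J₁}, (c i) ^ 2 * R :=
          Finset.sum_le_sum fun i _ => mul_le_mul_of_nonneg_left (hrow1 i) (sq_nonneg _)
      _ = S * R := (Finset.sum_mul _ _ _).symm
  have half2 : ∑ i : {i : Fin d₁ // i ∈ J₁}, ∑ j : {i : Fin d₁ // i ∈ J₁},
      (c j) ^ 2 * |pInner W J₂ (i : Fin d₁) (j : Fin d₁)| ≤ S * R := by
    rw [Finset.sum_comm]
    calc ∑ j : {i : Fin d₁ // i ∈ J₁}, ∑ i : {i : Fin d₁ // i ∈ J₁},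
        (c j) ^ 2 * |pInner W J₂ (i : Fin d₁) (j : Fin d₁)|
        = ∑ j : {i : Fin d₁ // i ∈ J₁}, (c j) ^ 2 *
            ∑ i : {i : Fin d₁ // i ∈ J₁}, |pInner W J₂ (i : Fin d₁) (j : Fin d₁)| := by
          exact Finset.sum_congr rfl fun j _ => (Finset.mul_sum _ _ _).symm
      _ ≤ ∑ j : {i : Fin d₁ // i ∈ J₁}, (c j) ^ 2 * R :=
          Finset.sum_le_sum fun j _ => mul_le_mul_of_nonneg_left (hrow2 j) (sq_nonneg _)
      _ = S * R := (Finset.sum_mul _ _ _).symm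
  have hQle : ∑ i : {i : Fin d₁ // i ∈ J₁}, ∑ j : {i : Fin d₁ // i ∈ J₁},
      c i * c j * pInner W J₂ (i : Fin d₁) (j : Fin d₁) ≤ S * R := by
    have key : ∑ i : {i : Fin d₁ // i ∈ J₁}, ∑ j : {i : Fin d₁ // i ∈ J₁},
        c i * c j * pInner W J₂ (i : Fin d₁) (j : Fin d₁)
        ≤ ∑ i : {i : Fin d₁ // i ∈ J₁}, ∑ j : {i : Fin d₁ // i ∈ J₁},
          ((c i) ^ 2 * |pInner W J₂ (i : Fin d₁) (j : Fin d₁)|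
            + (c j) ^ 2 * |pInner W J₂ (i : Fin d₁) (j : Fin d₁)|) / 2 := by
      apply Finset.sum_le_sum
      intro i _
      apply Finset.sum_le_sum
      intro j _
      have h1 : c i * c j * pInner W J₂ (i : Fin d₁) (j : Fin d₁)
          ≤ |c i| * |c j| * |pInner W J₂ (i : Fin d₁) (j : Fin d₁)| := by
        calc c i * c j * pInner W J₂ (i : Fin d₁) (j : Fin d₁)
            ≤ |c i * c j * pInner W J₂ (i : Fin d₁) (j : Fin d₁)| := le_abs_self _
          _ = |c i| * |c j| * |pInner W J₂ (i : Fin d₁) (j : Fin d₁)| := by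
              rw [abs_mul, abs_mul]
      refine h1.trans ?_
      nlinarith [sq_nonneg (|c i| - |c j|), abs_nonneg (pInner W J₂ (i : Fin d₁) (j : Fin d₁)),
        sq_abs (c i), sq_abs (c j)]
    refine key.trans ?_
    have hsplit : ∑ i : {i : Fin d₁ // i ∈ J₁}, ∑ j : {i : Fin d₁ // i ∈ J₁},
        ((c i) ^ 2 * |pInner W J₂ (i : Fin d₁) (j : Fin d₁)|
          + (c j) ^ 2 * |pInner W J₂ (i : Fin d₁) (j : Fin d₁)|) / 2
        = ((∑ i : {i : Fin d₁ // i ∈ J₁}, ∑ j : {i : Fin d₁ // i ∈ J₁},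
            (c i) ^ 2 * |pInner W J₂ (i : Fin d₁) (j : Fin d₁)|)
          + ∑ i : {i : Fin d₁ // i ∈ J₁}, ∑ j : {i : Fin d₁ // i ∈ J₁},
            (c j) ^ 2 * |pInner W J₂ (i : Fin d₁) (j : Fin d₁)|) / 2 := by
      calc ∑ i : {i : Fin d₁ // i ∈ J₁}, ∑ j : {i : Fin d₁ // i ∈ J₁},
          ((c i) ^ 2 * |pInner W J₂ (i : Fin d₁) (j : Fin d₁)|
            + (c j) ^ 2 * |pInner W J₂ (i : Fin d₁) (j : Fin d₁)|) / 2
          = ∑ i : {i : Fin d₁ // i ∈ J₁},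
            ((∑ j : {i : Fin d₁ // i ∈ J₁}, (c i) ^ 2 * |pInner W J₂ (i : Fin d₁) (j : Fin d₁)|)
              + ∑ j : {i : Fin d₁ // i ∈ J₁}, (c j) ^ 2 * |pInner W J₂ (i : Fin d₁) (j : Fin d₁)|)
              / 2 := by
            refine Finset.sum_congr rfl fun i _ => ?_
            rw [← Finset.sum_div, Finset.sum_add_distrib]
        _ = ((∑ i : {i : Fin d₁ // i ∈ J₁}, ∑ j : {i : Fin d₁ // i ∈ J₁},
            (c i) ^ 2 * |pInner W J₂ (i : Fin d₁) (j : Fin d₁)|)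
          + ∑ i : {i : Fin d₁ // i ∈ J₁}, ∑ j : {i : Fin d₁ // i ∈ J₁},
            (c j) ^ 2 * |pInner W J₂ (i : Fin d₁) (j : Fin d₁)|) / 2 := by
            rw [← Finset.sum_div, Finset.sum_add_distrib]
    rw [hsplit]
    linarith [half1, half2]
  -- Cauchy-Schwarz step
  have hSrepr : S = ∑ k : {j : Fin d₂ // j ∈ J₂},
      (∑ i : {i : Fin d₁ // i ∈ J₁}, c i * W (i : Fin d₁) (k : Fin d₂)) * x k := by
    calc S = ∑ i : {i : Fin d₁ // i ∈ J₁}, c i *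
          ∑ k : {j : Fin d₂ // j ∈ J₂}, W (i : Fin d₁) (k : Fin d₂) * x k := by
          exact Finset.sum_congr rfl fun i _ => by rw [sq]
      _ = ∑ i : {i : Fin d₁ // i ∈ J₁}, ∑ k : {j : Fin d₂ // j ∈ J₂},
          c i * (W (i : Fin d₁) (k : Fin d₂) * x k) :=
          Finset.sum_congr rfl fun i _ => Finset.mul_sum _ _ _
      _ = ∑ k : {j : Fin d₂ // j ∈ J₂}, ∑ i : {i : Fin d₁ // i ∈ J₁},
          c i * (W (i : Fin d₁) (k : Fin d₂) * x k) := Finset.sum_comm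
      _ = ∑ k : {j : Fin d₂ // j ∈ J₂},
          (∑ i : {i : Fin d₁ // i ∈ J₁}, c i * W (i : Fin d₁) (k : Fin d₂)) * x k := by
          refine Finset.sum_congr rfl fun k _ => ?_
          rw [Finset.sum_mul]
          exact Finset.sum_congr rfl fun i _ => by ring
  have hU : ∑ k : {j : Fin d₂ // j ∈ J₂},
      (∑ i : {i : Fin d₁ // i ∈ J₁}, c i * W (i : Fin d₁) (k : Fin d₂)) ^ 2
      = ∑ i : {i : Fin d₁ // i ∈ J₁}, ∑ j : {i : Fin d₁ // i ∈ J₁},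
        c i * c j * pInner W J₂ (i : Fin d₁) (j : Fin d₁) := by
    have h1 : ∀ k : {j : Fin d₂ // j ∈ J₂},
        (∑ i : {i : Fin d₁ // i ∈ J₁}, c i * W (i : Fin d₁) (k : Fin d₂)) ^ 2
        = ∑ i : {i : Fin d₁ // i ∈ J₁}, ∑ j : {i : Fin d₁ // i ∈ J₁},
          (c i * W (i : Fin d₁) (k : Fin d₂)) * (c j * W (j : Fin d₁) (k : Fin d₂)) := by
      intro k
      rw [sq, Finset.sum_mul_sum]
    calc ∑ k : {j : Fin d₂ // j ∈ J₂},
        (∑ i : {i : Fin d₁ // i ∈ J₁}, c i * W (i : Fin d₁) (k : Fin d₂)) ^ 2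
        = ∑ k : {j : Fin d₂ // j ∈ J₂}, ∑ i : {i : Fin d₁ // i ∈ J₁},
            ∑ j : {i : Fin d₁ // i ∈ J₁},
            (c i * W (i : Fin d₁) (k : Fin d₂)) * (c j * W (j : Fin d₁) (k : Fin d₂)) :=
          Finset.sum_congr rfl fun k _ => h1 k
      _ = ∑ i : {i : Fin d₁ // i ∈ J₁}, ∑ k : {j : Fin d₂ // j ∈ J₂},
            ∑ j : {i : Fin d₁ // i ∈ J₁},
            (c i * W (i : Fin d₁) (k : Fin d₂)) * (c j * W (j : Fin d₁) (k : Fin d₂)) :=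
          Finset.sum_comm
      _ = ∑ i : {i : Fin d₁ // i ∈ J₁}, ∑ j : {i : Fin d₁ // i ∈ J₁},
            ∑ k : {j : Fin d₂ // j ∈ J₂},
            (c i * W (i : Fin d₁) (k : Fin d₂)) * (c j * W (j : Fin d₁) (k : Fin d₂)) :=
          Finset.sum_congr rfl fun i _ => Finset.sum_comm
      _ = ∑ i : {i : Fin d₁ // i ∈ J₁}, ∑ j : {i : Fin d₁ // i ∈ J₁},
            c i * c j * pInner W J₂ (i : Fin d₁) (j : Fin d₁) := by
          refine Finset.sum_congr rfl fun i _ => Finset.sum_congr rfl fun j _ => ?_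
          calc ∑ k : {j : Fin d₂ // j ∈ J₂},
              (c i * W (i : Fin d₁) (k : Fin d₂)) * (c j * W (j : Fin d₁) (k : Fin d₂))
              = ∑ k : {j : Fin d₂ // j ∈ J₂},
                (c i * c j) * (W (i : Fin d₁) (k : Fin d₂) * W (j : Fin d₁) (k : Fin d₂)) :=
                Finset.sum_congr rfl fun k _ => by ring
            _ = (c i * c j) * ∑ k : {j : Fin d₂ // j ∈ J₂},
                W (i : Fin d₁) (k : Fin d₂) * W (j : Fin d₁) (k : Fin d₂) :=
                (Finset.mul_sum _ _ _).symm
            _ = c i * c j * pInner W J₂ (i : Fin d₁) (j : Fin d₁) := by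
                rw [pInner, Finset.sum_coe_sort J₂
                  (fun k => W (i : Fin d₁) k * W (j : Fin d₁) k)]
  have hCS : S ^ 2 ≤ (S * R) * T := by
    have h1 : S ^ 2 ≤ (∑ k : {j : Fin d₂ // j ∈ J₂},
        (∑ i : {i : Fin d₁ // i ∈ J₁}, c i * W (i : Fin d₁) (k : Fin d₂)) ^ 2) * T := by
      rw [hSrepr, hT]
      exact Finset.sum_mul_sq_le_sq_mul_sq Finset.univ _ _
    refine h1.trans ?_
    rw [hU]
    exact mul_le_mul_of_nonneg_right hQle hT0
  have hfinal : S ≤ R * T := by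
    rcases eq_or_lt_of_le hS0 with h | h
    · rw [← h]; exact mul_nonneg hR0 hT0
    · nlinarith
  -- put everything together
  rw [EuclideanSpace.norm_eq, EuclideanSpace.norm_eq]
  calc Real.sqrt (∑ i, ‖(Matrix.toEuclideanLin A) x i‖ ^ 2)
      = Real.sqrt S := by
        congr 1
        exact Finset.sum_congr rfl fun i _ => by rw [happly, Real.norm_eq_abs, sq_abs]
    _ ≤ Real.sqrt (R * T) := Real.sqrt_le_sqrt hfinal
    _ = Real.sqrt (1 + μ) * B * Real.sqrt T := by
        rw [hR, Real.sqrt_mul (mul_nonneg (by linarith : (0:ℝ) ≤ 1 + μ) (sq_nonneg B)),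
          Real.sqrt_mul (by linarith : (0:ℝ) ≤ 1 + μ), Real.sqrt_sq hB0]
    _ = Real.sqrt (1 + μ) * B * Real.sqrt (∑ k, ‖x k‖ ^ 2) := by
        congr 2
        exact Finset.sum_congr rfl fun k _ => by rw [Real.norm_eq_abs, sq_abs]
end
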